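/- Let n, m ≥ 1, let a ∈ ℝ^n and b ∈ ℝ^m be probability vectors, and let x : {1,…,n} → ℝ and y : {1,…,m} → ℝ. Define the CDFs F(t) = ∑_{i : x_i ≤ t} a_i and G(t) = ∑_{j : y_j ≤ t} b_j. Then the infimum over P ∈ U(a,b) of ∑_{i,j} P_{ij} |x_i − y_j| is attained and equals ∫_ℝ |F(t) − G(t)| dt. -/

import Mathlib

open Finset MeasureTheory

/-- A probability vector: nonnegative entries summing to 1. -/
def IsProbVec {n : ℕ} (a : Fin n → ℝ) : Prop :=
  (∀ i, 0 ≤ a i) ∧ ∑ i, a i = 1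

/-- The transportation polytope `U(a,b)`. -/
def transportPolytope {n m : ℕ} (a : Fin n → ℝ) (b : Fin m → ℝ) :
    Set (Fin n → Fin m → ℝ) :=
  {P | (∀ i j, 0 ≤ P i j) ∧ (∀ i, ∑ j, P i j = a i) ∧ (∀ j, ∑ i, P i j = b j)}

section Aux

lemma step_diff_eq (u v : ℝ) :
    (fun t => (if u ≤ t then (1:ℝ) else 0) - (if v ≤ t then 1 else 0))
      = fun t => (Set.Ico u v).indicator (fun _ => (1:ℝ)) t
          - (Set.Ico v u).indicator (fun _ => (1:ℝ)) t := by
  funext t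
  simp only [Set.indicator_apply, Set.mem_Ico]
  rcases le_or_gt u t with h1 | h1 <;> rcases le_or_gt v t with h2 | h2
  · simp [h1, h2, h1.not_gt, h2.not_gt]
  · simp [h1, h2, h1.not_gt, h2.not_ge]
  · simp [h1, h2, h1.not_ge, h2.not_gt]
  · simp [h1, h2, h1.not_ge, h2.not_ge]

lemma integrable_ind (u v : ℝ) :
    Integrable ((Set.Ico u v).indicator (fun _ => (1:ℝ))) := by
  rw [integrable_indicator_iff measurableSet_Ico]
  exact integrableOn_const (by rw [Real.volume_Ico]; exact ENNReal.ofReal_ne_top)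

lemma integrable_step (u v : ℝ) :
    Integrable (fun t => (if u ≤ t then (1:ℝ) else 0) - (if v ≤ t then 1 else 0)) := by
  rw [step_diff_eq]
  exact (integrable_ind u v).sub (integrable_ind v u)

lemma abs_step_eq (u v : ℝ) :
    (fun t => |(if u ≤ t then (1:ℝ) else 0) - (if v ≤ t then 1 else 0)|)
      = (Set.Ico (min u v) (max u v)).indicator (fun _ => (1:ℝ)) := by
  funext t
  simp only [Set.indicator_apply, Set.mem_Ico, min_le_iff, lt_max_iff]
  rcases le_or_gt u t with h1 | h1 <;> rcases le_or_gt v t with h2 | h2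
  · simp [h1, h2, h1.not_gt, h2.not_gt]
  · simp [h1, h2, h1.not_gt, h2.not_ge]
  · simp [h1, h2, h1.not_ge, h2.not_gt]
  · simp [h1, h2, h1.not_ge, h2.not_ge]

lemma integral_abs_step (u v : ℝ) :
    ∫ t : ℝ, |(if u ≤ t then (1:ℝ) else 0) - (if v ≤ t then 1 else 0)| = |u - v| := by
  rw [abs_step_eq, integral_indicator measurableSet_Ico]
  simp only [MeasureTheory.integral_const, smul_eq_mul, mul_one]
  rw [measureReal_def, Measure.restrict_apply_univ, Real.volume_Ico,
    ENNReal.toReal_ofReal (by simp [min_le_max] : (0:ℝ) ≤ max u v - min u v)]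
  rw [max_sub_min_eq_abs, abs_sub_comm]

lemma step_pos {u v t : ℝ}
    (h : 0 < (if u ≤ t then (1:ℝ) else 0) - (if v ≤ t then 1 else 0)) :
    u ≤ t ∧ t < v := by
  by_cases h1 : u ≤ t <;> by_cases h2 : v ≤ t <;> simp [h1, h2] at h ⊢ <;>
    first | exact not_le.mp h2 | linarith

lemma step_neg {u v t : ℝ}
    (h : (if u ≤ t then (1:ℝ) else 0) - (if v ≤ t then 1 else 0) < 0) :
    v ≤ t ∧ t < u := by
  by_cases h1 : u ≤ t <;> by_cases h2 : v ≤ t <;> simp [h1, h2] at h ⊢ <;>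
    first | exact not_le.mp h1 | linarith

lemma exists_mem_Ico {M : ℕ} (T : ℕ → ℝ) (hT : Monotone T) {s : ℝ}
    (h0 : T 0 ≤ s) (hM : s < T M) : ∃ l : Fin M, T l ≤ s ∧ s < T (l + 1) := by
  classical
  have hMpos : 0 < M := by
    by_contra h
    have : M = 0 := by omega
    subst this; exact absurd (lt_of_le_of_lt h0 hM) (lt_irrefl _)
  set k := Nat.findGreatest (fun k => T k ≤ s) (M - 1) with hk
  have hkle : k ≤ M - 1 := Nat.findGreatest_le _
  have hks : T k ≤ s := Nat.findGreatest_spec (P := fun k => T k ≤ s) (Nat.zero_le _) h0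
  have hklt : k < M := by omega
  refine ⟨⟨k, hklt⟩, hks, ?_⟩
  by_cases hk1 : k + 1 ≤ M - 1
  · have := Nat.findGreatest_is_greatest (P := fun k => T k ≤ s) (Nat.lt_succ_self k) hk1
    exact not_le.mp this
  · have : k + 1 ≥ M := by omega
    exact lt_of_lt_of_le hM (hT this)

lemma Ico_disjoint' {p q r s : ℝ} (h : q ≤ r) :
    Disjoint (Set.Ico p q) (Set.Ico r s) := by
  apply Set.disjoint_left.mpr
  rintro t ⟨_, h2⟩ ⟨h3, _⟩
  linarith

lemma sum_vol_inter {M : ℕ} (T : ℕ → ℝ) (hT : Monotone T) (p q : ℝ) (hpq : p ≤ q)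
    (hsub : Set.Ico p q ⊆ Set.Ico (T 0) (T M)) :
    ∑ l : Fin M, (volume (Set.Ico p q ∩ Set.Ico (T l) (T (l + 1)))).toReal = q - p := by
  classical
  have hunion : Set.Ico p q = ⋃ l ∈ Finset.univ (α := Fin M),
      (Set.Ico p q ∩ Set.Ico (T l) (T (l + 1))) := by
    ext t
    simp only [Set.mem_iUnion, Set.mem_inter_iff, Finset.mem_univ, exists_prop, true_and]
    constructor
    · intro ht
      obtain ⟨l, hl⟩ := exists_mem_Ico T hT (hsub ht).1 (hsub ht).2
      exact ⟨l, ht, by simpa using hl⟩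
    · rintro ⟨l, ht, _⟩; exact ht
  have hdisj : (Finset.univ (α := Fin M) : Set (Fin M)).PairwiseDisjoint
      (fun l : Fin M => Set.Ico p q ∩ Set.Ico (T l) (T (l + 1)))  := by
    intro i _ j _ hij
    rcases lt_or_gt_of_ne hij with h | h
    · have hn : (i : ℕ) + 1 ≤ (j : ℕ) := h
      exact (Ico_disjoint' (hT hn)).mono
        Set.inter_subset_right Set.inter_subset_right
    · have hn : (j : ℕ) + 1 ≤ (i : ℕ) := h
      exact ((Ico_disjoint' (hT hn)).symm).mono
        Set.inter_subset_right Set.inter_subset_right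
  have hvol : volume (Set.Ico p q) = ∑ l : Fin M,
      volume (Set.Ico p q ∩ Set.Ico (T l) (T (l + 1))) := by
    conv_lhs => rw [hunion]
    exact measure_biUnion_finset hdisj
      (fun l _ => measurableSet_Ico.inter measurableSet_Ico)
  have hfin : ∀ l : Fin M, volume (Set.Ico p q ∩ Set.Ico (T l) (T (l + 1))) ≠ ⊤ := by
    intro l
    exact ne_top_of_le_ne_top (by rw [Real.volume_Ico]; exact ENNReal.ofReal_ne_top)
      (measure_mono Set.inter_subset_left)
  rw [← ENNReal.toReal_sum (fun l _ => hfin l), ← hvol, Real.volume_Ico,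
    ENNReal.toReal_ofReal (by linarith)]

/-- successor step of the partial-sum function. -/
lemma partialSum_succ {N : ℕ} (w : Fin N → ℝ) (k : Fin N) :
    (∑ k' : Fin N, if (k' : ℕ) < (k : ℕ) + 1 then w k' else 0)
      = (∑ k' : Fin N, if (k' : ℕ) < (k : ℕ) then w k' else 0) + w k := by
  classical
  have h : ∀ k' : Fin N, (if (k' : ℕ) < (k : ℕ) + 1 then w k' else 0)
      = (if (k' : ℕ) < (k : ℕ) then w k' else 0) + (if k' = k then w k' else 0) := by
    intro k'
    by_cases h2 : k' = k
    · subst h2; simp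
    · have hne : (k' : ℕ) ≠ (k : ℕ) := fun e => h2 (Fin.ext e)
      by_cases h1 : (k' : ℕ) < (k : ℕ)
      · simp [h1, h2, show (k' : ℕ) < (k : ℕ) + 1 by omega]
      · simp [h1, h2, show ¬ ((k' : ℕ) < (k : ℕ) + 1) by omega]
  rw [Finset.sum_congr rfl (fun k' _ => h k'), Finset.sum_add_distrib]
  congr 1
  rw [Finset.sum_ite_eq' Finset.univ k w]
  simp

lemma partialSum_mono {N : ℕ} (w : Fin N → ℝ) (hw : ∀ k, 0 ≤ w k) :
    Monotone (fun k : ℕ => ∑ k' : Fin N, if (k' : ℕ) < k then w k' else 0) := by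
  intro k1 k2 hk
  apply Finset.sum_le_sum
  intro k' _
  by_cases h1 : (k' : ℕ) < k1
  · simp [h1, show (k' : ℕ) < k2 by omega]
  · simp [h1]
    split <;> [exact hw k'; exact le_refl 0]

end Aux

theorem stmt4 (n m : ℕ) (hn : 1 ≤ n) (hm : 1 ≤ m)
    (a : Fin n → ℝ) (b : Fin m → ℝ) (ha : IsProbVec a) (hb : IsProbVec b)
    (x : Fin n → ℝ) (y : Fin m → ℝ)
    (F G : ℝ → ℝ)
    (hF : ∀ t, F t = ∑ i, if x i ≤ t then a i else 0)
    (hG : ∀ t, G t = ∑ j, if y j ≤ t then b j else 0) :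
    IsLeast ((fun P => ∑ i, ∑ j, P i j * |x i - y j|) '' transportPolytope a b)
      (∫ t : ℝ, |F t - G t|) := by
  classical
  set d : ℝ → Fin n → Fin m → ℝ :=
    fun t i j => (if x i ≤ t then (1:ℝ) else 0) - (if y j ≤ t then 1 else 0) with hd
  have hint : ∀ (P : Fin n → Fin m → ℝ) (i : Fin n) (j : Fin m),
      Integrable (fun t => P i j * d t i j) :=
    fun P i j => (integrable_step (x i) (y j)).const_mul _
  have hintabs : ∀ (P : Fin n → Fin m → ℝ) (i : Fin n) (j : Fin m),
      Integrable (fun t => P i j * |d t i j|) :=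
    fun P i j => ((integrable_step (x i) (y j)).abs).const_mul _
  have hFG : ∀ P ∈ transportPolytope a b, ∀ t : ℝ,
      F t - G t = ∑ i, ∑ j, P i j * d t i j := by
    intro P hP t
    obtain ⟨hP0, hPr, hPc⟩ := hP
    have e1 : ∑ i, ∑ j, P i j * (if x i ≤ t then (1:ℝ) else 0) = F t := by
      rw [hF]
      refine Finset.sum_congr rfl fun i _ => ?_
      rw [← Finset.sum_mul, hPr i]
      by_cases h : x i ≤ t <;> simp [h]
    have e2 : ∑ i, ∑ j, P i j * (if y j ≤ t then (1:ℝ) else 0) = G t := by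
      rw [hG, Finset.sum_comm]
      refine Finset.sum_congr rfl fun j _ => ?_
      rw [← Finset.sum_mul, hPc j]
      by_cases h : y j ≤ t <;> simp [h]
    simp only [hd, mul_sub, Finset.sum_sub_distrib]
    rw [e1, e2]
  have hcost : ∀ P ∈ transportPolytope a b,
      ∑ i, ∑ j, P i j * |x i - y j|
        = ∫ t : ℝ, ∑ i, ∑ j, P i j * |d t i j| := by
    intro P hP
    rw [integral_finset_sum _ (fun i _ =>
      integrable_finset_sum _ (fun j _ => hintabs P i j))]
    refine Finset.sum_congr rfl fun i _ => ?_
    rw [integral_finset_sum _ (fun j _ => hintabs P i j)]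
    refine Finset.sum_congr rfl fun j _ => ?_
    simp only [hd]
    rw [MeasureTheory.integral_const_mul, integral_abs_step]
  constructor
  case right =>
    rintro z ⟨P, hP, rfl⟩
    simp only
    rw [hcost P hP]
    have heq : ∫ t : ℝ, |F t - G t| = ∫ t : ℝ, |∑ i, ∑ j, P i j * d t i j| := by
      congr 1; funext t; rw [hFG P hP t]
    rw [heq]
    apply integral_mono
    · exact (integrable_finset_sum _ (fun i _ =>
        integrable_finset_sum _ (fun j _ => hint P i j))).abs
    · exact integrable_finset_sum _ (fun i _ =>
        integrable_finset_sum _ (fun j _ => hintabs P i j))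
    · intro t
      calc |∑ i, ∑ j, P i j * d t i j| ≤ ∑ i, |∑ j, P i j * d t i j| :=
            Finset.abs_sum_le_sum_abs _ _
        _ ≤ ∑ i, ∑ j, P i j * |d t i j| := by
            refine Finset.sum_le_sum fun i _ => ?_
            calc |∑ j, P i j * d t i j| ≤ ∑ j, |P i j * d t i j| :=
                  Finset.abs_sum_le_sum_abs _ _
              _ = ∑ j, P i j * |d t i j| := by
                  refine Finset.sum_congr rfl fun j _ => ?_
                  rw [abs_mul, abs_of_nonneg (hP.1 i j)]
  case left =>
    set σ : Equiv.Perm (Fin n) := Tuple.sort x with hσ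
    set τ : Equiv.Perm (Fin m) := Tuple.sort y with hτ
    have hxσ : Monotone (x ∘ σ) := Tuple.monotone_sort x
    have hyτ : Monotone (y ∘ τ) := Tuple.monotone_sort y
    set S : ℕ → ℝ := fun k => ∑ k' : Fin n, if (k' : ℕ) < k then a (σ k') else 0 with hS
    set T : ℕ → ℝ := fun k => ∑ k' : Fin m, if (k' : ℕ) < k then b (τ k') else 0 with hT
    have hSmono : Monotone S := partialSum_mono _ (fun k => ha.1 (σ k))
    have hTmono : Monotone T := partialSum_mono _ (fun k => hb.1 (τ k))
    have hS0 : S 0 = 0 := by simp [hS]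
    have hT0 : T 0 = 0 := by simp [hT]
    have hSn : S n = 1 := by
      rw [hS]; simp only [Fin.is_lt, if_true]
      rw [Equiv.sum_comp σ a]; exact ha.2
    have hTm : T m = 1 := by
      rw [hT]; simp only [Fin.is_lt, if_true]
      rw [Equiv.sum_comp τ b]; exact hb.2
    have hSsucc : ∀ k : Fin n, S ((k : ℕ) + 1) = S (k : ℕ) + a (σ k) :=
      fun k => partialSum_succ _ k
    have hTsucc : ∀ l : Fin m, T ((l : ℕ) + 1) = T (l : ℕ) + b (τ l) :=
      fun l => partialSum_succ _ l
    have hIsub : ∀ k : Fin n, Set.Ico (S (k : ℕ)) (S ((k : ℕ) + 1)) ⊆ Set.Ico (T 0) (T m) := by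
      intro k
      apply Set.Ico_subset_Ico
      · rw [hT0, ← hS0]; exact hSmono (Nat.zero_le _)
      · rw [hTm, ← hSn]; exact hSmono (by omega)
    have hJsub : ∀ l : Fin m, Set.Ico (T (l : ℕ)) (T ((l : ℕ) + 1)) ⊆ Set.Ico (S 0) (S n) := by
      intro l
      apply Set.Ico_subset_Ico
      · rw [hS0, ← hT0]; exact hTmono (Nat.zero_le _)
      · rw [hSn, ← hTm]; exact hTmono (by omega)
    set P : Fin n → Fin m → ℝ := fun i j =>
      (volume (Set.Ico (S ((σ.symm i : ℕ))) (S ((σ.symm i : ℕ) + 1))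
        ∩ Set.Ico (T ((τ.symm j : ℕ))) (T ((τ.symm j : ℕ) + 1)))).toReal with hPdef
    have hPnn : ∀ i j, 0 ≤ P i j := fun i j => ENNReal.toReal_nonneg
    have hProw : ∀ i, ∑ j, P i j = a i := by
      intro i
      rw [← Equiv.sum_comp τ (fun j => P i j)]
      have hterm : ∀ l : Fin m, P i (τ l)
          = (volume (Set.Ico (S ((σ.symm i : ℕ))) (S ((σ.symm i : ℕ) + 1))
              ∩ Set.Ico (T (l : ℕ)) (T ((l : ℕ) + 1)))).toReal := by
        intro l; simp [hPdef, Equiv.symm_apply_apply]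
      rw [Finset.sum_congr rfl (fun l _ => hterm l),
        sum_vol_inter T hTmono _ _ (hSmono (Nat.le_succ _)) (hIsub (σ.symm i)),
        hSsucc (σ.symm i)]
      simp [Equiv.apply_symm_apply]
    have hPcol : ∀ j, ∑ i, P i j = b j := by
      intro j
      rw [← Equiv.sum_comp σ (fun i => P i j)]
      have hterm : ∀ k : Fin n, P (σ k) j
          = (volume (Set.Ico (T ((τ.symm j : ℕ))) (T ((τ.symm j : ℕ) + 1))
              ∩ Set.Ico (S (k : ℕ)) (S ((k : ℕ) + 1)))).toReal := by
        intro k; simp [hPdef, Equiv.symm_apply_apply, Set.inter_comm]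
      rw [Finset.sum_congr rfl (fun k _ => hterm k),
        sum_vol_inter S hSmono _ _ (hTmono (Nat.le_succ _)) (hJsub (τ.symm j)),
        hTsucc (τ.symm j)]
      simp [Equiv.apply_symm_apply]
    have hPmem : P ∈ transportPolytope a b := ⟨hPnn, hProw, hPcol⟩
    -- geometry: monotone support
    have hgeo : ∀ (t : ℝ) (i k : Fin n) (j l : Fin m), 0 < P i j → 0 < P k l →
        x i ≤ t → t < y j → y l ≤ t → t < x k → False := by
      intro t i k j l hij hkl hxi hyj hyl hxk
      have hne1 : volume (Set.Ico (S ((σ.symm i : ℕ))) (S ((σ.symm i : ℕ) + 1))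
          ∩ Set.Ico (T ((τ.symm j : ℕ))) (T ((τ.symm j : ℕ) + 1))) ≠ 0 := by
        intro h; rw [hPdef] at hij; simp only [h, ENNReal.toReal_zero] at hij
        exact lt_irrefl _ hij
      have hne2 : volume (Set.Ico (S ((σ.symm k : ℕ))) (S ((σ.symm k : ℕ) + 1))
          ∩ Set.Ico (T ((τ.symm l : ℕ))) (T ((τ.symm l : ℕ) + 1))) ≠ 0 := by
        intro h; rw [hPdef] at hkl; simp only [h, ENNReal.toReal_zero] at hkl
        exact lt_irrefl _ hkl
      obtain ⟨s, hs1, hs2⟩ := nonempty_of_measure_ne_zero hne1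
      obtain ⟨s', hs1', hs2'⟩ := nonempty_of_measure_ne_zero hne2
      have hxik : x i < x k := lt_of_le_of_lt hxi hxk
      have hylj : y l < y j := lt_of_le_of_lt hyl hyj
      have hσik : (σ.symm i : ℕ) < (σ.symm k : ℕ) := by
        by_contra hcon
        have : σ.symm k ≤ σ.symm i := by
          rw [Fin.le_iff_val_le_val]; omega
        have := hxσ this
        simp only [Function.comp_apply, Equiv.apply_symm_apply] at this
        linarith
      have hτlj : (τ.symm l : ℕ) < (τ.symm j : ℕ) := by
        by_contra hcon
        have : τ.symm j ≤ τ.symm l := by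
          rw [Fin.le_iff_val_le_val]; omega
        have := hyτ this
        simp only [Function.comp_apply, Equiv.apply_symm_apply] at this
        linarith
      have h1 : s < s' := by
        have := hSmono (show (σ.symm i : ℕ) + 1 ≤ (σ.symm k : ℕ) from hσik)
        exact lt_of_lt_of_le (lt_of_lt_of_le hs1.2 this) hs1'.1
      have h2 : s' < s := by
        have := hTmono (show (τ.symm l : ℕ) + 1 ≤ (τ.symm j : ℕ) from hτlj)
        exact lt_of_lt_of_le (lt_of_lt_of_le hs2'.2 this) hs2.1
      linarith
    -- pointwise equality for the monotone coupling
    have hpoint : ∀ t : ℝ, ∑ i, ∑ j, P i j * |d t i j| = |∑ i, ∑ j, P i j * d t i j| := by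
      intro t
      by_cases hpos : ∃ i j, 0 < P i j * d t i j
      · obtain ⟨i, j, h⟩ := hpos
        have hPij : 0 < P i j := by
          rcases eq_or_lt_of_le (hPnn i j) with h' | h'
          · rw [← h'] at h; simp at h
          · exact h'
        have hdij : 0 < d t i j := by
          by_contra hcon
          exact absurd h (not_lt.mpr
            (mul_nonpos_of_nonneg_of_nonpos (hPnn i j) (not_lt.mp hcon)))
        have hxy : x i ≤ t ∧ t < y j := by
          simp only [hd] at hdij
          exact step_pos hdij
        have hall : ∀ (k : Fin n) (l : Fin m), 0 ≤ P k l * d t k l := by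
          intro k l
          rcases eq_or_lt_of_le (hPnn k l) with h' | h'
          · rw [← h']; simp
          · apply mul_nonneg h'.le
            by_contra hcon
            have hdkl : d t k l < 0 := not_le.mp hcon
            simp only [hd] at hdkl
            obtain ⟨hyl, hxk⟩ := step_neg hdkl
            exact hgeo t i k j l hPij h' hxy.1 hxy.2 hyl hxk
        calc ∑ i, ∑ j, P i j * |d t i j| = ∑ i, ∑ j, P i j * d t i j := by
              refine Finset.sum_congr rfl fun k _ => Finset.sum_congr rfl fun l _ => ?_
              rw [← abs_of_nonneg (hPnn k l), ← abs_mul, abs_of_nonneg (hall k l),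
                abs_of_nonneg (hPnn k l)]
          _ = |∑ i, ∑ j, P i j * d t i j| :=
              (abs_of_nonneg (Finset.sum_nonneg fun k _ =>
                Finset.sum_nonneg fun l _ => hall k l)).symm
      · push_neg at hpos
        have hall : ∀ (k : Fin n) (l : Fin m), P k l * d t k l ≤ 0 := hpos
        calc ∑ i, ∑ j, P i j * |d t i j| = ∑ i, ∑ j, -(P i j * d t i j) := by
              refine Finset.sum_congr rfl fun k _ => Finset.sum_congr rfl fun l _ => ?_
              rw [← abs_of_nonneg (hPnn k l), ← abs_mul, abs_of_nonpos (hall k l),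
                abs_of_nonneg (hPnn k l)]
          _ = -∑ i, ∑ j, P i j * d t i j := by
              simp [Finset.sum_neg_distrib]
          _ = |∑ i, ∑ j, P i j * d t i j| :=
              (abs_of_nonpos (Finset.sum_nonpos fun k _ =>
                Finset.sum_nonpos fun l _ => hall k l)).symm
    refine ⟨P, hPmem, ?_⟩
    show ∑ i, ∑ j, P i j * |x i - y j| = ∫ t : ℝ, |F t - G t|
    rw [hcost P hPmem]
    congr 1
    funext t
    rw [hpoint t, hFG P hPmem t]
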